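/- Let L = (T_1,…,T_ℓ,S) be a tuple as in the setting satisfying the explicit conditions (H), (H'), (S), (T1), (T2), (G). If the right column of T_i is nonempty (so the fin of T_i exists), then the fin of T_i is an even number; moreover, if i < ℓ, then the right column of T_{i+1} is also nonempty and fin(T_i) ≤ fin(T_{i+1}). -/

import Mathlib

namespace OrthoBij

/-- `lev s i = #i(s) - #(-i)(s)` as an integer. -/
def lev (s : List ℤ) (i : ℤ) : ℤ := (s.count i : ℤ) - (s.count (-i) : ℤ)

/-- A vacillating tableau of dimension `k`: a word with letters in `{-k,…,k}` such that
every prefix satisfies the three conditions. -/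
def IsVacillating (k : ℕ) (w : List ℤ) : Prop :=
  (∀ a ∈ w, -(k : ℤ) ≤ a ∧ a ≤ (k : ℤ)) ∧
  ∀ s : List ℤ, s <+: w →
    (∀ i : ℤ, 1 ≤ i → i ≤ (k : ℤ) → 0 ≤ lev s i) ∧
    (∀ i : ℤ, 1 ≤ i → i + 1 ≤ (k : ℤ) → lev s (i + 1) ≤ lev s i) ∧
    (s.getLast? = some 0 → 0 < lev s (k : ℤ))

/-- The shape of the vacillating tableau is the empty partition. -/
def EmptyShape (k : ℕ) (w : List ℤ) : Prop :=
  ∀ i : ℤ, 1 ≤ i → i ≤ (k : ℤ) → lev w i = 0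

/-- Membership in `W(k,r)`: vacillating tableaux of dimension `k`, length `r`, shape `∅`. -/
def WMem (k r : ℕ) (w : List ℤ) : Prop :=
  IsVacillating k w ∧ w.length = r ∧ EmptyShape k w

/-- A filling of a Young diagram. -/
structure Tableau where
  shape : YoungDiagram
  entry : ℕ → ℕ → ℕ

/-- A standard Young tableau: an injective filling of the diagram with the numbers
`1,…,card`, strictly increasing along rows and columns, zero outside the diagram. -/
def IsSYT (Q : Tableau) : Prop :=
  (∀ i j, (i, j) ∉ Q.shape → Q.entry i j = 0) ∧
  (∀ i j, (i, j) ∈ Q.shape → 1 ≤ Q.entry i j ∧ Q.entry i j ≤ Q.shape.card) ∧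
  (∀ i j i' j', (i, j) ∈ Q.shape → (i', j') ∈ Q.shape →
      Q.entry i j = Q.entry i' j' → (i, j) = (i', j')) ∧
  (∀ i j₁ j₂, j₁ < j₂ → (i, j₂) ∈ Q.shape → Q.entry i j₁ < Q.entry i j₂) ∧
  (∀ i₁ i₂ j, i₁ < i₂ → (i₂, j) ∈ Q.shape → Q.entry i₁ j < Q.entry i₂ j)

/-- The shape has at most `2k+1` rows, all of even length. -/
def EvenRows (k : ℕ) (Q : Tableau) : Prop :=
  (∀ i, 2 * k + 1 ≤ i → Q.shape.rowLen i = 0) ∧ ∀ i, Even (Q.shape.rowLen i)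

/-- Membership in `E(k,r)`: standard Young tableaux with `r` entries whose shape has at
most `2k+1` rows, all of even length. -/
def EMem (k r : ℕ) (Q : Tableau) : Prop :=
  IsSYT Q ∧ Q.shape.card = r ∧ EvenRows k Q

/-- A partition, as a weakly decreasing list of positive integers. -/
def IsPartitionL (μ : List ℕ) : Prop :=
  μ.Pairwise (· ≥ ·) ∧ ∀ x ∈ μ, 0 < x

end OrthoBij

namespace OrthoBij

/-- A two-column skew tableau: inner-shape parameter `a`, right-column length `b`,
left column `left` and right column `right`, both listed from top to bottom.
The left column occupies rows `a, a+1, …` and the right column rows `0, 1, …, b-1`. -/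
structure TwoCol where
  a : ℕ
  b : ℕ
  left : List ℕ
  right : List ℕ

instance : Inhabited TwoCol := ⟨⟨0, 0, [], []⟩⟩

/-- The `i`-th entry of a column, counted from the bottom (`1`-based). -/
def botGet (c : List ℕ) (i : ℕ) : ℕ := c.getD (c.length - i) 0

/-- Row-semistandardness of `T` after sliding the right column down by `s` rows:
whenever the right cell number `t` (now in row `s + t`) has a left neighbour, the left
neighbour is not larger. -/
def SlidOK (T : TwoCol) (s : ℕ) : Prop :=
  ∀ t, t < T.right.length → T.a ≤ s + t → s + t - T.a < T.left.length →
    T.left.getD (s + t - T.a) 0 ≤ T.right.getD t 0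

/-- The residuum of `T` (with tail length `m`): the maximal number of positions the
right column can be slid down while keeping a semistandard skew tableau. -/
noncomputable def residuum (T : TwoCol) (m : ℕ) : ℕ :=
  sSup {s | s ≤ min T.a m ∧ SlidOK T s}

/-- `T` is a valid two-column skew semistandard tableau of shape
`(2^b, 1^m)/(1^a)` with `b ≥ a ≥ 0` both even and residuum at most `1`. -/
def IsTwoCol (m : ℕ) (T : TwoCol) : Prop :=
  Even T.a ∧ Even T.b ∧ T.a ≤ T.b ∧
  T.left.length = T.b - T.a + m ∧ T.right.length = T.b ∧
  (∀ x ∈ T.left, 0 < x) ∧ (∀ x ∈ T.right, 0 < x) ∧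
  T.left.Pairwise (· < ·) ∧ T.right.Pairwise (· < ·) ∧
  SlidOK T 0 ∧ residuum T m ≤ 1

/-- The tail of `T`: the bottom `m` entries of the left column. -/
def tailOf (T : TwoCol) : List ℕ := T.left.drop (T.b - T.a)

/-- The tail root of `T`: the topmost tail entry. -/
def tailRoot (T : TwoCol) : ℕ := T.left.getD (T.b - T.a) 0

/-- The lower tail of `T`: the tail without the tail root. -/
def lowerTail (T : TwoCol) : List ℕ := T.left.drop (T.b - T.a + 1)

/-- The fin of `T`: the largest (bottom) entry of the right column. -/
def finOf (T : TwoCol) : ℕ := botGet T.right 1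

/-- `x` occurs as a gap in the (strictly increasing) column `col`. -/
def IsGapIn (col : List ℕ) (x : ℕ) : Prop := x ∈ col ∧ 1 < x ∧ (x - 1) ∉ col

/-- `x` occurs as a slot in the column `col`. -/
def IsSlotIn (col : List ℕ) (x : ℕ) : Prop := x ∈ col ∧ (x + 1) ∉ col

/-- `T` is of type 1: residuum `0` and all gaps lie in the tail. -/
def Type1 (m : ℕ) (T : TwoCol) : Prop :=
  residuum T m = 0 ∧ (∀ x, ¬ IsGapIn T.right x) ∧
  ∀ x, IsGapIn T.left x → x ∈ tailOf T

/-- `T` is of type 2: residuum `1` and all gaps lie in the lower tail. -/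
def Type2 (m : ℕ) (T : TwoCol) : Prop :=
  residuum T m = 1 ∧ (∀ x, ¬ IsGapIn T.right x) ∧
  ∀ x, IsGapIn T.left x → x ∈ lowerTail T

/-- `T` is of type 3: residuum `1`, the fin is a gap, and all other gaps lie in the
lower tail. -/
def Type3 (m : ℕ) (T : TwoCol) : Prop :=
  residuum T m = 1 ∧ IsGapIn T.right (finOf T) ∧
  (∀ x, IsGapIn T.right x → x = finOf T) ∧
  ∀ x, IsGapIn T.left x → x ∈ lowerTail T

/-- A skew semistandard tableau of rectangular outer shape, recorded by its columns
(from left to right, each from top to bottom, bottom-aligned in the rectangle). -/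
structure RectCols where
  cols : List (List ℕ)

/-- Validity of such a tableau with `c` columns, all of the same length parity. -/
def IsRect (c : ℕ) (S : RectCols) : Prop :=
  S.cols.length = c ∧
  (∀ col ∈ S.cols, col.Pairwise (· < ·) ∧ ∀ x ∈ col, 0 < x) ∧
  (∀ t, t + 1 < c → (S.cols.getD t []).length ≤ (S.cols.getD (t + 1) []).length) ∧
  (∀ t u, t < c → u < c →
      (S.cols.getD t []).length % 2 = (S.cols.getD u []).length % 2) ∧
  (∀ t i, t + 1 < c → 1 ≤ i → i ≤ (S.cols.getD t []).length →
      botGet (S.cols.getD t []) i ≤ botGet (S.cols.getD (t + 1) []) i)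

/-- The leftmost column `S^L` of `S`. -/
def SL (S : RectCols) : List ℕ := S.cols.getD 0 []

/-- `S` is even: its columns have even length. -/
def SEven (S : RectCols) : Prop := (SL S).length % 2 = 0

/-- A tuple `L = (T₁, …, T_ℓ, S)`. -/
structure KTupleData where
  Ts : List TwoCol
  S : RectCols

/-- The `j`-th two-column tableau of the tuple (`0`-based). -/
def TAt (d : KTupleData) (j : ℕ) : TwoCol := d.Ts.getD j default

/-- The residuum `r_j` of the `j`-th tableau. -/
noncomputable def resAt (μ : List ℕ) (d : KTupleData) (j : ℕ) : ℕ :=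
  residuum (TAt d j) (μ.getD j 0)

/-- Structural validity of the tuple for `SO(2k+1)` and the partition `μ`. -/
def IsKTuple (k : ℕ) (μ : List ℕ) (d : KTupleData) : Prop :=
  d.Ts.length = μ.length ∧
  (∀ j, j < μ.length → IsTwoCol (μ.getD j 0) (TAt d j)) ∧
  IsRect (2 * k + 1 - 2 * μ.length) d.S

/-- All columns of the tuple, ordered from left to right. -/
def colListOf (d : KTupleData) : List (List ℕ) :=
  (d.Ts.map (fun T => [T.left, T.right])).flatten ++ d.S.cols

/-- Condition (H). -/
noncomputable def CondH (μ : List ℕ) (d : KTupleData) : Prop :=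
  ∀ i, i + 1 < μ.length →
    (TAt d i).b ≤ (TAt d (i + 1)).b - (TAt d (i + 1)).a +
      2 * resAt μ d i * resAt μ d (i + 1)

/-- Condition (H'). -/
noncomputable def CondH' (μ : List ℕ) (d : KTupleData) : Prop :=
  0 < μ.length →
    (SEven d.S → (TAt d (μ.length - 1)).b ≤ (SL d.S).length) ∧
    (¬ SEven d.S →
      (TAt d (μ.length - 1)).b ≤ (SL d.S).length - 1 + 2 * resAt μ d (μ.length - 1))

/-- Condition (S): `S` contains no gap. -/
def CondS (d : KTupleData) : Prop :=
  ∀ col ∈ d.S.cols, ∀ x, ¬ IsGapIn col x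

/-- Condition (T1) without its final (tail-root) clause. -/
noncomputable def CondT1noTR (μ : List ℕ) (d : KTupleData) : Prop :=
  (∀ i, i < μ.length →
      Type1 (μ.getD i 0) (TAt d i) ∨ Type2 (μ.getD i 0) (TAt d i) ∨
        Type3 (μ.getD i 0) (TAt d i)) ∧
  (∀ i, i + 1 < μ.length → Type3 (μ.getD i 0) (TAt d i) →
      resAt μ d (i + 1) = 1 ∧ finOf (TAt d i) ≤ finOf (TAt d (i + 1))) ∧
  (0 < μ.length → Type3 (μ.getD (μ.length - 1) 0) (TAt d (μ.length - 1)) →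
      ¬ SEven d.S)

/-- The tail-root clause of condition (T1). -/
noncomputable def CondT1TR (μ : List ℕ) (d : KTupleData) : Prop :=
  0 < μ.length → Type1 (μ.getD (μ.length - 1) 0) (TAt d (μ.length - 1)) →
    ¬ SEven d.S → tailRoot (TAt d (μ.length - 1)) ≤ botGet (SL d.S) 1

/-- Condition (T1). -/
noncomputable def CondT1 (μ : List ℕ) (d : KTupleData) : Prop :=
  CondT1noTR μ d ∧ CondT1TR μ d

/-- Condition (T2): the tails, placed side by side with tops aligned, form a
semistandard Young tableau. -/
def CondT2 (μ : List ℕ) (d : KTupleData) : Prop :=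
  ∀ i t, i + 1 < μ.length → t < (tailOf (TAt d (i + 1))).length →
    (tailOf (TAt d i)).getD t 0 ≤ (tailOf (TAt d (i + 1))).getD t 0

/-- Condition (G): for every value `x` there is an injection from the occurrences of
`x` as a gap to the occurrences of `x - 1` as a slot, each gap being assigned a slot
occurrence in a column strictly to its right. -/
def CondG (d : KTupleData) : Prop :=
  ∀ x : ℕ,
    ∃ f : {c : ℕ // c < (colListOf d).length ∧ IsGapIn ((colListOf d).getD c []) x} →
        {c : ℕ // c < (colListOf d).length ∧ IsSlotIn ((colListOf d).getD c []) (x - 1)},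
      Function.Injective f ∧
        ∀ c : {c : ℕ // c < (colListOf d).length ∧
            IsGapIn ((colListOf d).getD c []) x}, c.val < (f c).val

/-- `L` has content `λ`: the letter `x` occurs exactly `λ'_x` times altogether, where
`λ'` is the conjugate partition. -/
def CondContent (lam : List ℕ) (d : KTupleData) : Prop :=
  ∀ x : ℕ, 1 ≤ x →
    ((colListOf d).map (fun col => col.count x)).sum =
      lam.countP (fun y => decide (x ≤ y))

end OrthoBij

namespace OrthoBij

lemma getD_lt_getD {l : List ℕ} (h : l.Pairwise (·<·)) {i j : ℕ} (hij : i < j) (hj : j < l.length) :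
    l.getD i 0 < l.getD j 0 := by
  rw [List.getD_eq_getElem l 0 (hij.trans hj), List.getD_eq_getElem l 0 hj]
  exact List.pairwise_iff_getElem.mp h i j _ _ hij

lemma getD_mem' {α : Type*} {l : List α} {d : α} {i : ℕ} (hi : i < l.length) : l.getD i d ∈ l := by
  rw [List.getD_eq_getElem l d hi]; exact List.getElem_mem _

lemma mem_getD {l : List ℕ} {x : ℕ} (h : x ∈ l) : ∃ i, i < l.length ∧ l.getD i 0 = x := by
  obtain ⟨i, hi, e⟩ := List.mem_iff_getElem.mp h
  exact ⟨i, hi, by rw [List.getD_eq_getElem l 0 hi, e]⟩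

lemma getD_drop {l : List ℕ} {n i : ℕ} (h : i < (l.drop n).length) :
    (l.drop n).getD i 0 = l.getD (n+i) 0 := by
  have h' : i < l.length - n := by simpa using h
  rw [List.getD_eq_getElem _ 0 h, List.getD_eq_getElem l 0 (by omega), List.getElem_drop]

lemma mem_drop_getD {l : List ℕ} {x N : ℕ} (h : x ∈ l.drop N) :
    ∃ q, N ≤ q ∧ q < l.length ∧ l.getD q 0 = x := by
  obtain ⟨i, hi, e⟩ := mem_getD h
  have h' : i < l.length - N := by simpa using hi
  exact ⟨N + i, by omega, by omega, by rw [← getD_drop hi, e]⟩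

lemma head_lemma {L : List ℕ} (hs : L.Pairwise (·<·)) (hpos : ∀ x ∈ L, 0 < x)
    {N : ℕ} (hg : ∀ x, IsGapIn L x → x ∈ L.drop N) :
    ∀ p, p < N → p < L.length → L.getD p 0 = p + 1 := by
  intro p
  induction p with
  | zero =>
    intro hN hlen
    set v := L.getD 0 0 with hv
    have hvpos : 0 < v := hpos _ (getD_mem' hlen)
    by_contra hne
    have h1 : 1 < v := by omega
    have hgap : IsGapIn L v := by
      refine ⟨getD_mem' hlen, h1, fun hmem => ?_⟩
      obtain ⟨q, hq, e⟩ := mem_getD hmem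
      rcases Nat.eq_zero_or_pos q with rfl | hq0
      · omega
      · have := getD_lt_getD hs hq0 hq; omega
    obtain ⟨q, hNq, hq, e⟩ := mem_drop_getD (hg v hgap)
    have hq0 : 0 < q := by omega
    have := getD_lt_getD hs hq0 hq
    omega
  | succ p ih =>
    intro hN hlen
    have hihv := ih (by omega) (by omega)
    set v := L.getD (p+1) 0 with hv
    have hlt : L.getD p 0 < v := getD_lt_getD hs (Nat.lt_succ_self p) hlen
    by_contra hne
    have hvbig : p + 3 ≤ v := by omega
    by_cases hmem : (v - 1) ∈ L
    · obtain ⟨q, hq, e⟩ := mem_getD hmem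
      rcases Nat.lt_trichotomy q (p+1) with h' | h' | h'
      · rcases Nat.lt_or_ge q p with h'' | h''
        · have := getD_lt_getD hs h'' (by omega); omega
        · have hqp : q = p := by omega
          subst hqp; omega
      · subst h'; omega
      · have h2 := getD_lt_getD hs h' hq; omega
    · have hgap : IsGapIn L v := ⟨getD_mem' hlen, by omega, hmem⟩
      obtain ⟨q, hNq, hq, e⟩ := mem_drop_getD (hg v hgap)
      have : p + 1 < q := by omega
      have := getD_lt_getD hs this hq
      omega

lemma mem_of_le_head {L : List ℕ} (hs : L.Pairwise (·<·)) (hpos : ∀ x ∈ L, 0 < x)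
    {N : ℕ} (hg : ∀ x, IsGapIn L x → x ∈ L.drop N) {f : ℕ}
    (h1 : 1 ≤ f) (h2 : f ≤ N) (h3 : f ≤ L.length) : f ∈ L := by
  have := head_lemma hs hpos hg (f-1) (by omega) (by omega)
  have : L.getD (f-1) 0 = f := by omega
  rw [← this]; exact getD_mem' (by omega)

lemma residuum_mem {T : TwoCol} {m : ℕ} (h0 : SlidOK T 0) :
    residuum T m ≤ min T.a m ∧ SlidOK T (residuum T m) := by
  have hne : Set.Nonempty {s | s ≤ min T.a m ∧ SlidOK T s} := ⟨0, Nat.zero_le _, h0⟩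
  have hbdd : BddAbove {s | s ≤ min T.a m ∧ SlidOK T s} := ⟨min T.a m, fun s hs => hs.1⟩
  exact Nat.sSup_mem hne hbdd

lemma le_residuum {T : TwoCol} {m s : ℕ} (h : s ≤ min T.a m) (h2 : SlidOK T s) :
    s ≤ residuum T m :=
  le_csSup ⟨min T.a m, fun s hs => hs.1⟩ ⟨h, h2⟩

lemma res_one_a {m : ℕ} {T : TwoCol} (hT : IsTwoCol m T) (hr : residuum T m = 1) :
    2 ≤ T.a ∧ 1 ≤ m := by
  obtain ⟨hae, -, -, -, -, -, -, -, -, hs0, -⟩ := hT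
  have h := (residuum_mem (m := m) hs0).1
  rw [hr] at h
  obtain ⟨h1, h2⟩ := Nat.le_min.mp h
  obtain ⟨c, hc⟩ := hae
  omega

lemma col_interval {col : List ℕ} (hs : col.Pairwise (·<·)) (hpos : ∀ x ∈ col, 0 < x)
    (hng : ∀ x, ¬ IsGapIn col x) : ∀ p, p < col.length → col.getD p 0 = p + 1 :=
  fun p hp => head_lemma hs hpos (N := col.length) (fun x hx => absurd hx (hng x)) p hp hp

lemma col_mem_interval {col : List ℕ} (hs : col.Pairwise (·<·)) (hpos : ∀ x ∈ col, 0 < x)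
    (hng : ∀ x, ¬ IsGapIn col x) {x : ℕ} (hx : x ∈ col) : 1 ≤ x ∧ x ≤ col.length := by
  obtain ⟨i, hi, e⟩ := mem_getD hx
  have := col_interval hs hpos hng i hi
  omega

lemma col_interval3 {col : List ℕ} (hs : col.Pairwise (·<·)) (hpos : ∀ x ∈ col, 0 < x)
    (hg : ∀ x, IsGapIn col x → x = botGet col 1) :
    ∀ p, p + 1 < col.length → col.getD p 0 = p + 1 := by
  have hgd : ∀ x, IsGapIn col x → x ∈ col.drop (col.length - 1) := by
    intro x hx
    have hne : col ≠ [] := by rintro rfl; exact List.not_mem_nil hx.1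
    have hlen : 0 < col.length := List.length_pos_iff.mpr hne
    have h0 : 0 < (col.drop (col.length - 1)).length := by
      rw [List.length_drop]; omega
    have e := getD_drop (l := col) (n := col.length - 1) (i := 0) h0
    rw [hg x hx]
    show botGet col 1 ∈ _
    have e2 : botGet col 1 = (col.drop (col.length - 1)).getD 0 0 := by
      rw [e]; rfl
    rw [e2]; exact getD_mem' h0
  exact fun p hp => head_lemma hs hpos hgd p (by omega) (by omega)

lemma finOf_eq_getD (T : TwoCol) : finOf T = T.right.getD (T.right.length - 1) 0 := rfl

lemma fin_eq_b {m : ℕ} {T : TwoCol} (hT : IsTwoCol m T)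
    (hng : ∀ x, ¬ IsGapIn T.right x) (hb : T.right ≠ []) : finOf T = T.b := by
  obtain ⟨-, -, -, -, hlR, -, hposR, -, hsR, -, -⟩ := hT
  have hlen : 0 < T.right.length := List.length_pos_iff.mpr hb
  have := col_interval hsR hposR hng (T.right.length - 1) (by omega)
  rw [finOf_eq_getD]
  omega

lemma fin3_ge {m : ℕ} {T : TwoCol} (hT : IsTwoCol m T)
    (hgap : IsGapIn T.right (finOf T)) (hg3 : ∀ x, IsGapIn T.right x → x = finOf T)
    (hb2 : 2 ≤ T.b) : T.b + 1 ≤ finOf T := by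
  obtain ⟨-, -, -, -, hlR, -, hposR, -, hsR, -, -⟩ := hT
  have h1 := col_interval3 hsR hposR hg3 (T.b - 2) (by omega)
  have h2 : T.right.getD (T.b - 2) 0 < T.right.getD (T.b - 1) 0 :=
    getD_lt_getD hsR (by omega) (by omega)
  have hfin : finOf T = T.right.getD (T.b - 1) 0 := by rw [finOf_eq_getD, hlR]
  by_contra h
  have : finOf T - 1 ∈ T.right := by
    have e : T.right.getD (T.b - 2) 0 = finOf T - 1 := by omega
    rw [← e]; exact getD_mem' (by omega)
  exact hgap.2.2 this

lemma lowertail_gt {m : ℕ} {T : TwoCol} (hT : IsTwoCol m T)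
    (hr : residuum T m = 1)
    (hgL : ∀ x, IsGapIn T.left x → x ∈ lowerTail T)
    (hg3 : ∀ x, IsGapIn T.right x → x = finOf T) :
    ∀ p, T.b - T.a + 1 ≤ p → p < T.left.length → finOf T < T.left.getD p 0 := by
  have ha2 : 2 ≤ T.a := (res_one_a hT hr).1
  obtain ⟨hae, hbe, hab, hlL, hlR, hposL, hposR, hsL, hsR, hs0, hres⟩ := hT
  intro p hp hplen
  have hm2 : 2 ≤ m := by omega
  have hns2 : ¬ SlidOK T 2 := fun h2 => by
    have := le_residuum (T := T) (m := m) (Nat.le_min.mpr ⟨ha2, hm2⟩) h2; omega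
  rw [SlidOK] at hns2; push_neg at hns2
  obtain ⟨t, ht, hat, htl, hviol⟩ := hns2
  have hgLd : ∀ x, IsGapIn T.left x → x ∈ T.left.drop (T.b - T.a + 1) := hgL
  have hqeq : 2 + t - T.a = T.b - T.a + 1 ∧ t = T.b - 1 := by
    rcases Nat.lt_or_ge (2 + t - T.a) (T.b - T.a + 1) with hlt | hge
    · exfalso
      have hL := head_lemma hsL hposL hgLd (2 + t - T.a) hlt htl
      have hR := col_interval3 hsR hposR hg3 t (by omega)
      omega
    · omega
  have hfin : finOf T = T.right.getD (T.b - 1) 0 := by rw [finOf_eq_getD, hlR]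
  obtain ⟨hq1, hq2⟩ := hqeq
  have hfin2 : T.right.getD t 0 = finOf T := by rw [hfin, hq2]
  rcases Nat.eq_or_lt_of_le hp with he | hlt
  · have hpq : 2 + t - T.a = p := by omega
    rw [hpq] at hviol; omega
  · have hmono := getD_lt_getD hsL (show 2 + t - T.a < p by omega) hplen
    omega

lemma flatten_length (Ts : List TwoCol) :
    (Ts.map fun T => [T.left, T.right]).flatten.length = 2 * Ts.length := by
  induction Ts with
  | nil => simp
  | cons T Ts ih => simp [ih]; omega

lemma colListOf_length (d : KTupleData) :
    (colListOf d).length = 2 * d.Ts.length + d.S.cols.length := by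
  rw [colListOf, List.length_append, flatten_length]

lemma flatten_getD (Ts : List TwoCol) (rest : List (List ℕ)) :
    ∀ j, j < Ts.length →
      ((Ts.map fun T => [T.left, T.right]).flatten ++ rest).getD (2*j) [] =
        (Ts.getD j default).left ∧
      ((Ts.map fun T => [T.left, T.right]).flatten ++ rest).getD (2*j+1) [] =
        (Ts.getD j default).right := by
  induction Ts with
  | nil => intro j hj; simp at hj
  | cons T Ts ih =>
    intro j hj
    cases j with
    | zero => simp
    | succ j =>
      have e : 2 * (j + 1) = 2 * j + 1 + 1 := by omega
      rw [e]
      simpa using ih j (by simpa using hj)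

lemma flatten_getD_S (Ts : List TwoCol) (rest : List (List ℕ)) (t : ℕ) :
    ((Ts.map fun T => [T.left, T.right]).flatten ++ rest).getD (2*Ts.length + t) [] =
      rest.getD t [] := by
  induction Ts with
  | nil => simp
  | cons T Ts ih =>
    have e : 2 * (T :: Ts).length + t = 2 * Ts.length + t + 1 + 1 := by simp; omega
    rw [e]
    simpa using ih

lemma scols_mono {S : RectCols} {c : ℕ} (hR : IsRect c S) :
    ∀ t, t < c → (S.cols.getD 0 []).length ≤ (S.cols.getD t []).length := by
  intro t
  induction t with
  | zero => intro _; exact le_rfl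
  | succ t ih =>
    intro h
    exact le_trans (ih (by omega)) (hR.2.2.1 t h)

lemma fin_mono {μ : List ℕ} {d : KTupleData}
    (hTs : ∀ j, j < μ.length → IsTwoCol (μ.getD j 0) (TAt d j))
    (hH : CondH μ d) (hT1 : CondT1noTR μ d) :
    ∀ i, i + 1 < μ.length → (TAt d i).right ≠ [] →
      (TAt d (i+1)).right ≠ [] ∧ finOf (TAt d i) ≤ finOf (TAt d (i+1)) := by
  intro i hi hne
  have hti := hTs i (by omega)
  have htj := hTs (i+1) hi
  have hbi : (TAt d i).right.length = (TAt d i).b := hti.2.2.2.2.1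
  have hbj : (TAt d (i+1)).right.length = (TAt d (i+1)).b := htj.2.2.2.2.1
  have hbi2 : 2 ≤ (TAt d i).b := by
    have h1 := List.length_pos_iff.mpr hne
    obtain ⟨c, hc⟩ := hti.2.1
    omega
  have hHi := hH i hi
  have hri : resAt μ d i ≤ 1 := hti.2.2.2.2.2.2.2.2.2.2
  have hrj : resAt μ d (i+1) ≤ 1 := htj.2.2.2.2.2.2.2.2.2.2
  have habj : (TAt d (i+1)).a ≤ (TAt d (i+1)).b := htj.2.2.1
  have hbj2 : 2 ≤ (TAt d (i+1)).b := by
    obtain ⟨cj, hcj⟩ := htj.2.1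
    rcases Nat.eq_zero_or_pos (TAt d (i+1)).b with h0 | h1
    · exfalso
      have h3 : resAt μ d (i+1) ≤ (TAt d (i+1)).a :=
        le_trans (residuum_mem (m := μ.getD (i+1) 0) htj.2.2.2.2.2.2.2.2.2.1).1
          (min_le_left _ _)
      have h2 : resAt μ d (i+1) = 0 := by omega
      rw [h2, Nat.mul_zero] at hHi
      omega
    · omega
  have hnej : (TAt d (i+1)).right ≠ [] := by
    intro h; rw [h] at hbj; simp at hbj; omega
  refine ⟨hnej, ?_⟩
  have hTy_i := hT1.1 i (by omega)
  have hTy_j := hT1.1 (i+1) hi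
  rcases hTy_i with h1 | h2 | h3
  rotate_right
  · exact (hT1.2.1 i hi h3).2
  all_goals {
    first
      | (have hfi : finOf (TAt d i) = (TAt d i).b := fin_eq_b hti h1.2.1 hne)
      | (have hfi : finOf (TAt d i) = (TAt d i).b := fin_eq_b hti h2.2.1 hne)
    rcases hTy_j with g1 | g2 | g3
    · have hfj := fin_eq_b htj g1.2.1 hnej
      have e0 : resAt μ d (i+1) = 0 := g1.1
      rw [e0, Nat.mul_zero] at hHi
      omega
    · have hfj := fin_eq_b htj g2.2.1 hnej
      have ha2 := (res_one_a htj g2.1).1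
      have e1 : resAt μ d (i+1) = 1 := g2.1
      rw [e1, Nat.mul_one] at hHi
      omega
    · have hfj := fin3_ge htj g3.2.1 g3.2.2.1 hbj2
      have ha2 := (res_one_a htj g3.1).1
      have e1 : resAt μ d (i+1) = 1 := g3.1
      rw [e1, Nat.mul_one] at hHi
      omega }

lemma fin_chain {μ : List ℕ} {d : KTupleData}
    (hTs : ∀ j, j < μ.length → IsTwoCol (μ.getD j 0) (TAt d j))
    (hH : CondH μ d) (hT1 : CondT1noTR μ d) :
    ∀ i j, i ≤ j → j < μ.length → (TAt d i).right ≠ [] →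
      (TAt d j).right ≠ [] ∧ finOf (TAt d i) ≤ finOf (TAt d j) := by
  intro i
  refine Nat.le_induction ?_ ?_
  · intro _ hne; exact ⟨hne, le_rfl⟩
  · intro j _ ih hj hne
    obtain ⟨h1, h2⟩ := ih (by omega) hne
    obtain ⟨h3, h4⟩ := fin_mono hTs hH hT1 j hj h1
    exact ⟨h3, le_trans h2 h4⟩

end OrthoBij

open OrthoBij in
/-- Let `L = (T₁, …, T_ℓ, S)` be a structurally valid tuple satisfying
the explicit conditions (H), (H'), (S), (T1), (T2), (G).  If the right column of `T_i`
is nonempty, then the fin of `T_i` is even; moreover, if `i < ℓ`, the right column of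
`T_{i+1}` is also nonempty and `fin(T_i) ≤ fin(T_{i+1})`. -/
theorem statement14 (k : ℕ) (hk : 1 ≤ k) (μ : List ℕ)
    (hμ : IsPartitionL μ) (hμk : μ.length ≤ k)
    (d : KTupleData) (hd : IsKTuple k μ d)
    (hH : CondH μ d) (hH' : CondH' μ d) (hS : CondS d)
    (hT1 : CondT1 μ d) (hT2 : CondT2 μ d) (hG : CondG d) :
    ∀ i, i < μ.length → (TAt d i).right ≠ [] →
      Even (finOf (TAt d i)) ∧
      (i + 1 < μ.length →
        (TAt d (i + 1)).right ≠ [] ∧ finOf (TAt d i) ≤ finOf (TAt d (i + 1))) := by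
  obtain ⟨hlen, hTs, hRect⟩ := hd
  obtain ⟨hT1a, hT1b⟩ := hT1
  have hchain := fin_chain hTs hH hT1a
  intro i hi hne
  refine ⟨?_, fun h => fin_mono hTs hH hT1a i h hne⟩
  have hti := hTs i hi
  rcases hT1a.1 i hi with h1 | h2 | h3
  · rw [fin_eq_b hti h1.2.1 hne]; exact hti.2.1
  · rw [fin_eq_b hti h2.2.1 hne]; exact hti.2.1
  -- Type 3
  set f := finOf (TAt d i) with hfdef
  have hbi : (TAt d i).right.length = (TAt d i).b := hti.2.2.2.2.1
  have hbi2 : 2 ≤ (TAt d i).b := by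
    have h1 := List.length_pos_iff.mpr hne
    obtain ⟨c, hc⟩ := hti.2.1
    omega
  have hf3 : (TAt d i).b + 1 ≤ f := fin3_ge hti h3.2.1 h3.2.2.1 hbi2
  have hclen := colListOf_length d
  have hc0lt : 2*i+1 < (colListOf d).length := by omega
  have hgetc0 : (colListOf d).getD (2*i+1) [] = (TAt d i).right := by
    simp only [colListOf]
    exact (flatten_getD d.Ts d.S.cols i (by omega)).2
  obtain ⟨F, hFinj, hFlt⟩ := hG f
  set g : {c : ℕ // c < (colListOf d).length ∧ IsGapIn ((colListOf d).getD c []) f} :=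
    ⟨2*i+1, hc0lt, by rw [hgetc0]; exact h3.2.1⟩ with hgdef
  have hlt' : 2*i+1 < (F g).val := hFlt g
  set c' := (F g).val with hc'def
  have hc'lt : c' < (colListOf d).length := (F g).2.1
  have hslot : IsSlotIn ((colListOf d).getD c' []) (f - 1) := (F g).2.2
  have hfm : f - 1 + 1 = f := by omega
  rcases Nat.lt_or_ge c' (2 * d.Ts.length) with hcase | hcase
  · -- slot inside some T_j
    set j := c' / 2 with hjdef
    have hj_lt : j < μ.length := by omega
    have hij : i < j := by omega
    obtain ⟨hnej, hchainij⟩ := hchain i j (le_of_lt hij) hj_lt hne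
    have htj := hTs j hj_lt
    have hbj : (TAt d j).right.length = (TAt d j).b := htj.2.2.2.2.1
    have hlLj : (TAt d j).left.length = (TAt d j).b - (TAt d j).a + μ.getD j 0 :=
      htj.2.2.2.1
    have habj : (TAt d j).a ≤ (TAt d j).b := htj.2.2.1
    have hsLj : (TAt d j).left.Pairwise (· < ·) := htj.2.2.2.2.2.2.2.1
    have hsRj : (TAt d j).right.Pairwise (· < ·) := htj.2.2.2.2.2.2.2.2.1
    have hposLj : ∀ x ∈ (TAt d j).left, 0 < x := htj.2.2.2.2.2.1
    have hposRj : ∀ x ∈ (TAt d j).right, 0 < x := htj.2.2.2.2.2.2.1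
    have hbj2 : 2 ≤ (TAt d j).b := by
      have h1 := List.length_pos_iff.mpr hnej
      obtain ⟨c, hc⟩ := htj.2.1
      omega
    by_cases hpar : c' % 2 = 0
    · -- slot in the left column of T_j
      have he2 : c' = 2*j := by omega
      have hgetc' : (colListOf d).getD c' [] = (TAt d j).left := by
        rw [he2]; simp only [colListOf]
        exact (flatten_getD d.Ts d.S.cols j (by omega)).1
      rw [hgetc'] at hslot
      have hvmem : f - 1 ∈ (TAt d j).left := hslot.1
      have hnotf : f ∉ (TAt d j).left := by rw [← hfm]; exact hslot.2
      rcases hT1a.1 j hj_lt with g1 | g2 | g3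
      · -- T_j of type 1
        exfalso
        have hrj0 : resAt μ d j = 0 := g1.1
        have hgd : ∀ x, IsGapIn (TAt d j).left x →
            x ∈ (TAt d j).left.drop ((TAt d j).b - (TAt d j).a) := g1.2.2
        have hjne : i + 1 ≠ j := fun he => by
          have := (hT1a.2.1 i (by omega) h3).1
          rw [he] at this; omega
        have htp := hTs (j-1) (by omega)
        have hnotype3 : ¬ Type3 (μ.getD (j-1) 0) (TAt d (j-1)) := fun hq => by
          have h5 := (hT1a.2.1 (j-1) (by omega) hq).1
          have e5 : j - 1 + 1 = j := by omega
          rw [e5] at h5; omega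
        obtain ⟨hnep, hchainip⟩ := hchain i (j-1) (by omega) (by omega) hne
        have hfp : finOf (TAt d (j-1)) = (TAt d (j-1)).b := by
          rcases hT1a.1 (j-1) (by omega) with q1 | q2 | q3
          · exact fin_eq_b htp q1.2.1 hnep
          · exact fin_eq_b htp q2.2.1 hnep
          · exact absurd q3 hnotype3
        have hHp := hH (j-1) (by omega)
        have e5 : j - 1 + 1 = j := by omega
        rw [e5, hrj0, Nat.mul_zero] at hHp
        have hfle : f ≤ (TAt d j).b - (TAt d j).a := by omega
        exact hnotf (mem_of_le_head hsLj hposLj hgd (by omega) hfle (by omega))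
      all_goals {
        -- T_j of type 2 or 3
        first
          | (have hrj1 : residuum (TAt d j) (μ.getD j 0) = 1 := g2.1
             have hgL : ∀ x, IsGapIn (TAt d j).left x →
                 x ∈ (TAt d j).left.drop ((TAt d j).b - (TAt d j).a + 1) := g2.2.2
             have hg3 : ∀ x, IsGapIn (TAt d j).right x → x = finOf (TAt d j) :=
               fun x hx => absurd hx (g2.2.1 x))
          | (have hrj1 : residuum (TAt d j) (μ.getD j 0) = 1 := g3.1
             have hgL : ∀ x, IsGapIn (TAt d j).left x →
                 x ∈ (TAt d j).left.drop ((TAt d j).b - (TAt d j).a + 1) := g3.2.2.2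
             have hg3 : ∀ x, IsGapIn (TAt d j).right x → x = finOf (TAt d j) := g3.2.2.1)
        have hm1 : 1 ≤ μ.getD j 0 := (res_one_a htj hrj1).2
        have hlow := lowertail_gt htj hrj1 hgL hg3
        obtain ⟨q, hq, heq⟩ := mem_getD hvmem
        rcases Nat.lt_or_ge q ((TAt d j).b - (TAt d j).a + 1) with hqlt | hqge
        · have hhead := head_lemma hsLj hposLj hgL q hqlt hq
          rcases Nat.lt_or_ge (f - 1) ((TAt d j).b - (TAt d j).a + 1) with hflt | hfge
          · exact absurd
              (mem_of_le_head hsLj hposLj hgL (by omega) (by omega) (by omega)) hnotf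
          · -- f = b - a + 2 : even
            have hfe : f = (TAt d j).b - (TAt d j).a + 2 := by omega
            obtain ⟨ca, hca⟩ := htj.1
            obtain ⟨cb, hcb⟩ := htj.2.1
            rw [Nat.even_iff]
            omega
        · exfalso
          have := hlow q hqge hq
          omega }
    · -- slot in the right column of T_j
      have he2 : c' = 2*j+1 := by omega
      have hgetc' : (colListOf d).getD c' [] = (TAt d j).right := by
        rw [he2]; simp only [colListOf]
        exact (flatten_getD d.Ts d.S.cols j (by omega)).2
      rw [hgetc'] at hslot
      have hvmem : f - 1 ∈ (TAt d j).right := hslot.1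
      have hnotf : f ∉ (TAt d j).right := by rw [← hfm]; exact hslot.2
      rcases hT1a.1 j hj_lt with g1 | g2 | g3
      · exfalso
        have hfj := fin_eq_b htj g1.2.1 hnej
        have hngd : ∀ x, IsGapIn (TAt d j).right x →
            x ∈ (TAt d j).right.drop ((TAt d j).right.length) :=
          fun x hx => absurd hx (g1.2.1 x)
        exact hnotf (mem_of_le_head hsRj hposRj hngd (by omega) (by omega) (by omega))
      · exfalso
        have hfj := fin_eq_b htj g2.2.1 hnej
        have hngd : ∀ x, IsGapIn (TAt d j).right x →
            x ∈ (TAt d j).right.drop ((TAt d j).right.length) :=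
          fun x hx => absurd hx (g2.2.1 x)
        exact hnotf (mem_of_le_head hsRj hposRj hngd (by omega) (by omega) (by omega))
      · -- T_j of type 3 : f = b_j
        have hfj3 : (TAt d j).b + 1 ≤ finOf (TAt d j) := fin3_ge htj g3.2.1 g3.2.2.1 hbj2
        obtain ⟨p, hp, hep⟩ := mem_getD hvmem
        have hfinj : finOf (TAt d j) = (TAt d j).right.getD ((TAt d j).b - 1) 0 := by
          rw [finOf_eq_getD, hbj]
        rcases Nat.lt_or_ge p ((TAt d j).b - 1) with hplt | hpge
        · have := col_interval3 hsRj hposRj g3.2.2.1 p (by omega)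
          -- f = p + 2 ≤ b_j
          have hfb : f ≤ (TAt d j).b := by omega
          rcases Nat.lt_or_ge f (TAt d j).b with hflt | hfge
          · exfalso
            have h6 := col_interval3 hsRj hposRj g3.2.2.1 (f-1) (by omega)
            have : f ∈ (TAt d j).right := by
              have e6 : (TAt d j).right.getD (f-1) 0 = f := by omega
              rw [← e6]; exact getD_mem' (by omega)
            exact hnotf this
          · -- f = b_j  even
            have : f = (TAt d j).b := by omega
            rw [this]; exact htj.2.1
        · exfalso
          have hpe : p = (TAt d j).b - 1 := by omega
          rw [hpe, ← hfinj] at hep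
          omega
  · -- slot inside S
    set t := c' - 2 * d.Ts.length with htdef
    have ht : t < d.S.cols.length := by omega
    have e : c' = 2 * d.Ts.length + t := by omega
    have hgetc' : (colListOf d).getD c' [] = d.S.cols.getD t [] := by
      rw [e]; simp only [colListOf]
      exact flatten_getD_S _ _ t
    rw [hgetc'] at hslot
    have hcolmem : d.S.cols.getD t [] ∈ d.S.cols := getD_mem' ht
    obtain ⟨hsortS, hposS⟩ := hRect.2.1 _ hcolmem
    have hngS : ∀ x, ¬ IsGapIn (d.S.cols.getD t []) x := hS _ hcolmem
    have hvmem : f - 1 ∈ d.S.cols.getD t [] := hslot.1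
    have hnotf : f ∉ d.S.cols.getD t [] := by rw [← hfm]; exact hslot.2
    have hvle := col_mem_interval hsortS hposS hngS hvmem
    have hngd : ∀ x, IsGapIn (d.S.cols.getD t []) x →
        x ∈ (d.S.cols.getD t []).drop ((d.S.cols.getD t []).length) :=
      fun x hx => absurd hx (hngS x)
    have hfgt : (d.S.cols.getD t []).length < f := by
      by_contra hcon
      exact hnotf (mem_of_le_head hsortS hposS hngd (by omega) (by omega) (by omega))
    have hfh : f = (d.S.cols.getD t []).length + 1 := by omega
    have hScols : d.S.cols.length = 2 * k + 1 - 2 * μ.length := hRect.1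
    have hmono := scols_mono hRect t (by omega)
    have hodd : ¬ SEven d.S := by
      intro hev
      rcases hT1a.1 (μ.length - 1) (by omega) with q1 | q2 | q3
      · obtain ⟨hneE, hchE⟩ := hchain i (μ.length-1) (by omega) (by omega) hne
        have hfE := fin_eq_b (hTs (μ.length-1) (by omega)) q1.2.1 hneE
        have hH'E := (hH' (by omega)).1 hev
        have hSLe : SL d.S = d.S.cols.getD 0 [] := rfl
        rw [hSLe] at hH'E
        omega
      · obtain ⟨hneE, hchE⟩ := hchain i (μ.length-1) (by omega) (by omega) hne
        have hfE := fin_eq_b (hTs (μ.length-1) (by omega)) q2.2.1 hneE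
        have hH'E := (hH' (by omega)).1 hev
        have hSLe : SL d.S = d.S.cols.getD 0 [] := rfl
        rw [hSLe] at hH'E
        omega
      · exact hT1a.2.2 (by omega) q3 hev
    have hoddnum : (d.S.cols.getD 0 []).length % 2 ≠ 0 := hodd
    have hpar := hRect.2.2.2.1 t 0 (by omega) (by omega)
    rw [Nat.even_iff]
    omega
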